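/- Let L ⊆ N be modules over a commutative ring R and g ∈ R such that N/L is finite and multiplication by g is injective on N, with gL ⊆ L. Then N/gN and L/gL have the same cardinality: |N/gN| = |L/gL|. -/

import Mathlib

/-- If `N/L` is finite, multiplication by `g` is injective on `N` and maps `L` into
`L`, then `|N/gN| = |L/gL|` (in particular one is finite iff the other is). -/
theorem miles_finite_index_quotients {R M : Type*} [CommRing R] [AddCommGroup M]
    [Module R M] (L : Submodule R M) (g : R)
    (hfin : Finite (M ⧸ L))
    (hinj : Function.Injective fun x : M => g • x)
    (hmap : Submodule.map (LinearMap.lsmul R M g) L ≤ L) :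
    (Finite (M ⧸ Submodule.map (LinearMap.lsmul R M g) (⊤ : Submodule R M)) ↔
      Finite (↥L ⧸ Submodule.map (LinearMap.lsmul R ↥L g) (⊤ : Submodule R ↥L))) ∧
    Nat.card (M ⧸ Submodule.map (LinearMap.lsmul R M g) (⊤ : Submodule R M)) =
      Nat.card (↥L ⧸ Submodule.map (LinearMap.lsmul R ↥L g) (⊤ : Submodule R ↥L)) := by
  set f := LinearMap.lsmul R M g with hf
  set A := L.toAddSubgroup with hA
  set B := (Submodule.map f (⊤ : Submodule R M)).toAddSubgroup with hB
  set C := (Submodule.map f L).toAddSubgroup with hC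
  have hCB : C ≤ B := by
    intro x hx
    obtain ⟨y, _, hy⟩ := hx
    exact ⟨y, trivial, hy⟩
  have hCA : C ≤ A := fun x hx => hmap hx
  -- comap of C under f is A
  have hcomap : AddSubgroup.comap f.toAddMonoidHom C = A := by
    ext x
    constructor
    · rintro ⟨y, hy, hxy⟩
      have : y = x := hinj hxy
      rwa [← this]
    · intro hx
      exact ⟨x, hx, rfl⟩
  have hmapTop : AddSubgroup.map f.toAddMonoidHom ⊤ = B := by
    ext x
    constructor
    · rintro ⟨y, _, hy⟩; exact ⟨y, trivial, hy⟩
    · rintro ⟨y, _, hy⟩; exact ⟨y, trivial, hy⟩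
  have hrel : C.relIndex B = A.index := by
    have := AddSubgroup.relIndex_comap C f.toAddMonoidHom ⊤
    rw [hcomap, hmapTop, AddSubgroup.relIndex_top_right] at this
    exact this.symm
  have h1 : C.relIndex B * B.index = C.index := AddSubgroup.relIndex_mul_index hCB
  have h2 : C.relIndex A * A.index = C.index := AddSubgroup.relIndex_mul_index hCA
  have hAfin : A.index ≠ 0 := by
    have : Finite (M ⧸ A) := hfin
    exact AddSubgroup.index_ne_zero_of_finite
  -- the L-side quotient has card equal to C.relindex A
  have hLside : Nat.card (↥L ⧸ Submodule.map (LinearMap.lsmul R ↥L g) (⊤ : Submodule R ↥L)) =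
      C.relIndex A := by
    have hsub : (Submodule.map (LinearMap.lsmul R ↥L g) (⊤ : Submodule R ↥L)).toAddSubgroup =
        C.addSubgroupOf A := by
      ext x
      constructor
      · rintro ⟨y, _, hy⟩
        exact ⟨(y : M), y.2, congrArg Subtype.val hy⟩
      · rintro ⟨y, hyL, hy⟩
        exact ⟨⟨y, hyL⟩, trivial, Subtype.ext hy⟩
    show (Submodule.map (LinearMap.lsmul R ↥L g) (⊤ : Submodule R ↥L)).toAddSubgroup.index
        = (C.addSubgroupOf A).index
    rw [hsub]
  have hn : A.index * B.index = A.index * C.relIndex A := by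
    calc A.index * B.index = C.relIndex B * B.index := by rw [hrel]
      _ = C.index := h1
      _ = C.relIndex A * A.index := h2.symm
      _ = A.index * C.relIndex A := Nat.mul_comm _ _
  have key : B.index = C.relIndex A :=
    Nat.eq_of_mul_eq_mul_left (Nat.pos_of_ne_zero hAfin) hn
  have hcards : Nat.card (M ⧸ Submodule.map f (⊤ : Submodule R M)) =
      Nat.card (↥L ⧸ Submodule.map (LinearMap.lsmul R ↥L g) (⊤ : Submodule R ↥L)) := by
    rw [hLside]
    exact key
  refine ⟨?_, hcards⟩
  constructor
  · intro h
    have h0 : Nat.card (M ⧸ Submodule.map f (⊤ : Submodule R M)) ≠ 0 :=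
      Nat.card_ne_zero.2 ⟨⟨0⟩, h⟩
    rw [hcards] at h0
    exact (Nat.card_ne_zero.1 h0).2
  · intro h
    have h0 : Nat.card (↥L ⧸ Submodule.map (LinearMap.lsmul R ↥L g) (⊤ : Submodule R ↥L)) ≠ 0 :=
      Nat.card_ne_zero.2 ⟨⟨0⟩, h⟩
    rw [← hcards] at h0
    exact (Nat.card_ne_zero.1 h0).2
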